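/- If K : (0,∞) → ℝ is locally integrable, eventually decreasing, tends to 0 at infinity, and satisfies t·K(t) → C₁ > 0 as t → ∞, then the improper integral K_sin(ω) = ∫₀^∞ K(t) sin(ωt) dt converges to C₁·π/2 as ω → 0⁺. -/

import Mathlib

open MeasureTheory Filter Set Real Topology

set_option maxHeartbeats 1000000

section Stmt0Aux

lemma abs_sinc_le_one (u : ℝ) : |Real.sin u / u| ≤ 1 := by
  by_cases hu : u = 0
  · simp [hu]
  · rw [abs_div, div_le_one (abs_pos.2 hu)]
    exact (Real.abs_sin_lt_abs hu).le

lemma abs_sin_nat (n : ℕ) (x : ℝ) : |Real.sin (n * x)| ≤ n * |Real.sin x| := by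
  induction n with
  | zero => simp
  | succ n ih =>
    have h : ((n + 1 : ℕ) : ℝ) * x = n * x + x := by push_cast; ring
    rw [h, Real.sin_add]
    calc |Real.sin (n*x) * Real.cos x + Real.cos (n*x) * Real.sin x|
        ≤ |Real.sin (n*x) * Real.cos x| + |Real.cos (n*x) * Real.sin x| := abs_add_le _ _
      _ ≤ |Real.sin (n*x)| * 1 + 1 * |Real.sin x| := by
          rw [abs_mul, abs_mul]
          gcongr
          · exact Real.abs_cos_le_one x
          · exact Real.abs_cos_le_one _
      _ ≤ (n:ℝ) * |Real.sin x| + 1 * |Real.sin x| := by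
          rw [mul_one]
          gcongr
      _ = ((n + 1 : ℕ) : ℝ) * |Real.sin x| := by push_cast; ring

lemma abs_sin_le_self {x : ℝ} (hx : 0 ≤ x) : |Real.sin x| ≤ x := by
  rcases eq_or_lt_of_le hx with h | h
  · simp [← h]
  · exact le_of_lt (by simpa [abs_of_pos h] using Real.abs_sin_lt_abs h.ne')

lemma tail_bound (f : ℝ → ℝ) (ω a b : ℝ) (hω : 0 < ω) (ha : 0 < a) (hab : a ≤ b)
    (hf : AntitoneOn f (Icc a b)) (hfb : 0 ≤ f b)
    (hfi : ∀ c d, a ≤ c → c ≤ d → d ≤ b →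
      IntervalIntegrable (fun t => f t * Real.sin (ω * t)) volume c d) :
    |∫ t in a..b, f t * Real.sin (ω * t)| ≤ 4 * π * f a / ω := by
  have hs1 : ∀ y : ℝ, |Real.sin y| ≤ 1 := fun y =>
    abs_le.mpr ⟨Real.neg_one_le_sin y, Real.sin_le_one y⟩
  set p := π / ω with hpdef
  have hp : 0 < p := div_pos Real.pi_pos hω
  have hfa : 0 ≤ f a := hfb.trans (hf (left_mem_Icc.2 hab) (right_mem_Icc.2 hab) hab)
  have hgoal : 4 * π * f a / ω = 4 * (f a * p) := by rw [hpdef]; field_simp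
  rw [hgoal]
  have hbd : ∀ t ∈ Icc a b, |f t * Real.sin (ω * t)| ≤ f a := by
    intro t ht
    have h1 : f t ≤ f a := hf (left_mem_Icc.2 hab) ht ht.1
    have h2 : 0 ≤ f t := hfb.trans (hf ht (right_mem_Icc.2 hab) ht.2)
    calc |f t * Real.sin (ω * t)| = f t * |Real.sin (ω * t)| := by
          rw [abs_mul, abs_of_nonneg h2]
      _ ≤ f a * 1 := mul_le_mul h1 (hs1 _) (abs_nonneg _) hfa
      _ = f a := mul_one _
  have hωp : ω * p = π := by rw [hpdef]; field_simp
  have hsin : ∀ t : ℝ, Real.sin (ω * (t + p)) = -Real.sin (ω * t) := by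
    intro t
    rw [mul_add, hωp, Real.sin_add_pi]
  set m : ℤ := ⌈a / p⌉ with hm
  set q0 : ℝ := m * p with hq0
  have haq0 : a ≤ q0 := by
    rw [hq0]
    calc a = a / p * p := by field_simp
      _ ≤ m * p := by gcongr; exact Int.le_ceil _
  have hq0a : q0 ≤ a + p := by
    rw [hq0]
    have := (Int.ceil_lt_add_one (a / p)).le
    calc (m:ℝ) * p ≤ (a / p + 1) * p := by gcongr
      _ = a + p := by field_simp
  by_cases hbq : b ≤ q0
  · have := intervalIntegral.norm_integral_le_of_norm_le_const
      (C := f a) (f := fun t => f t * Real.sin (ω * t)) (a := a) (b := b) ?_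
    · rw [Real.norm_eq_abs] at this
      calc |∫ t in a..b, f t * Real.sin (ω * t)| ≤ f a * |b - a| := this
        _ ≤ f a * p := by
            apply mul_le_mul_of_nonneg_left _ hfa
            rw [abs_of_nonneg (by linarith)]; linarith
        _ ≤ 4 * (f a * p) := by nlinarith [mul_nonneg hfa hp.le]
    · intro x hx
      rw [Set.uIoc_of_le hab] at hx
      exact hbd x ⟨hx.1.le, hx.2⟩
  · push_neg at hbq
    set n : ℕ := ⌊(b - q0) / (2 * p)⌋₊ with hn
    set q : ℕ → ℝ := fun i => q0 + i * (2 * p) with hq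
    have hq0' : q 0 = q0 := by simp [hq]
    have hqsucc : ∀ i, q (i + 1) = q i + 2 * p := by
      intro i; simp only [hq]; push_cast; ring
    have hqmono : ∀ i j : ℕ, i ≤ j → q i ≤ q j := by
      intro i j hij
      simp only [hq]
      have : (i : ℝ) ≤ j := by exact_mod_cast hij
      nlinarith
    have hqa : ∀ i, a ≤ q i := by
      intro i
      refine haq0.trans ?_
      simpa [hq0'] using hqmono 0 i (Nat.zero_le i)
    have hqnb : q n ≤ b := by
      have h1 : (n : ℝ) ≤ (b - q0) / (2 * p) :=
        Nat.floor_le (div_nonneg (by linarith) (by positivity))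
      have h2 : (n : ℝ) * (2 * p) ≤ b - q0 := (le_div_iff₀ (by positivity)).1 h1
      simp only [hq]; linarith
    have hbqn1 : b < q (n + 1) := by
      have h1 : (b - q0) / (2 * p) < n + 1 := Nat.lt_floor_add_one _
      have h2 : b - q0 < ((n:ℝ) + 1) * (2 * p) := by
        rw [div_lt_iff₀ (by positivity)] at h1
        exact_mod_cast h1
      simp only [hq]; push_cast; linarith
    have hqib : ∀ i ≤ n, q i ≤ b := fun i hi => (hqmono i n hi).trans hqnb
    have hint := hfi
    have hsplit : ∫ t in a..b, f t * Real.sin (ω * t)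
        = (∫ t in a..(q 0), f t * Real.sin (ω * t))
          + (∫ t in (q 0)..(q n), f t * Real.sin (ω * t))
          + ∫ t in (q n)..b, f t * Real.sin (ω * t) := by
      rw [intervalIntegral.integral_add_adjacent_intervals
        (hint a (q 0) le_rfl (hqa 0) (hqib 0 (Nat.zero_le n)))
        (hint (q 0) (q n) (hqa 0) (hqmono 0 n (Nat.zero_le n)) hqnb),
        intervalIntegral.integral_add_adjacent_intervals
        (hint a (q n) le_rfl (hqa n) hqnb) (hint (q n) b (hqa n) hqnb le_rfl)]
    have hedge1 : |∫ t in a..(q 0), f t * Real.sin (ω * t)| ≤ f a * p := by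
      have := intervalIntegral.norm_integral_le_of_norm_le_const
        (C := f a) (f := fun t => f t * Real.sin (ω * t)) (a := a) (b := q 0) ?_
      · rw [Real.norm_eq_abs] at this
        refine this.trans ?_
        apply mul_le_mul_of_nonneg_left _ hfa
        rw [abs_of_nonneg (by linarith [hqa 0])]
        rw [hq0']; linarith
      · intro x hx
        rw [Set.uIoc_of_le (hqa 0)] at hx
        exact hbd x ⟨hx.1.le, hx.2.trans (hqib 0 (Nat.zero_le n))⟩
    have hedge2 : |∫ t in (q n)..b, f t * Real.sin (ω * t)| ≤ f a * (2 * p) := by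
      have := intervalIntegral.norm_integral_le_of_norm_le_const
        (C := f a) (f := fun t => f t * Real.sin (ω * t)) (a := q n) (b := b) ?_
      · rw [Real.norm_eq_abs] at this
        refine this.trans ?_
        apply mul_le_mul_of_nonneg_left _ hfa
        rw [abs_of_nonneg (by linarith [hqnb])]
        have h3 := hbqn1
        rw [hqsucc n] at h3
        linarith
      · intro x hx
        rw [Set.uIoc_of_le hqnb] at hx
        exact hbd x ⟨(hqa n).trans hx.1.le, hx.2⟩
    have hpiece : ∀ i, i < n → |∫ t in (q i)..(q (i+1)), f t * Real.sin (ω * t)|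
        ≤ (f (q i) - f (q (i+1))) * p := by
      intro i hi
      have hqi_b : q (i+1) ≤ b := hqib (i+1) hi
      have h2p : q (i+1) = q i + 2*p := hqsucc i
      have hqi_b' : q i + 2*p ≤ b := by rw [← h2p]; exact hqi_b
      have hiiA : IntervalIntegrable (fun t => f t * Real.sin (ω*t)) volume (q i) (q i + p) :=
        hint _ _ (hqa i) (by linarith) (by linarith)
      have hiiB : IntervalIntegrable (fun t => f t * Real.sin (ω*t)) volume (q i + p) (q i + 2*p) :=
        hint _ _ (by linarith [hqa i]) (by linarith) (by linarith)
      have hiiB' : IntervalIntegrable (fun t => f (t + p) * Real.sin (ω*(t + p))) volume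
          (q i) (q i + p) := by
        have h := hiiB.comp_add_right p
        simpa [show q i + p - p = q i from by ring,
          show q i + 2*p - p = q i + p from by ring] using h
      have hsplit2 : ∫ t in (q i)..(q (i+1)), f t * Real.sin (ω * t)
          = (∫ t in (q i)..(q i + p), f t * Real.sin (ω * t))
            + ∫ t in (q i + p)..(q i + 2*p), f t * Real.sin (ω * t) := by
        rw [intervalIntegral.integral_add_adjacent_intervals hiiA hiiB, h2p]
      have hshift : ∫ t in (q i + p)..(q i + 2*p), f t * Real.sin (ω * t)
          = ∫ t in (q i)..(q i + p), f (t + p) * Real.sin (ω * (t + p)) := by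
        rw [show q i + 2*p = q i + p + p from by ring,
          intervalIntegral.integral_comp_add_right (fun t => f t * Real.sin (ω * t)) p]
      have hcomb : ∫ t in (q i)..(q (i+1)), f t * Real.sin (ω * t)
          = ∫ t in (q i)..(q i + p), (f t - f (t + p)) * Real.sin (ω * t) := by
        rw [hsplit2, hshift, ← intervalIntegral.integral_add hiiA hiiB']
        congr 1; funext t
        rw [hsin t]; ring
      rw [hcomb]
      have := intervalIntegral.norm_integral_le_of_norm_le_const
        (C := f (q i) - f (q (i+1))) (a := q i) (b := q i + p)
        (f := fun t => (f t - f (t + p)) * Real.sin (ω * t)) ?_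
      · rw [Real.norm_eq_abs] at this
        refine this.trans ?_
        rw [add_sub_cancel_left, abs_of_pos hp]
      · intro x hx
        rw [Set.uIoc_of_le (by linarith)] at hx
        obtain ⟨hx1, hx2⟩ := hx
        have hxb : x ∈ Icc a b := ⟨(hqa i).trans hx1.le, by linarith⟩
        have hxpb : x + p ∈ Icc a b := ⟨by linarith [hqa i], by linarith⟩
        have hqiI : q i ∈ Icc a b := ⟨hqa i, by linarith⟩
        have hqi1I : q (i+1) ∈ Icc a b := ⟨hqa (i+1), hqi_b⟩
        have hmono1 : f x ≤ f (q i) := hf hqiI hxb hx1.le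
        have hmono2 : f (q (i+1)) ≤ f (x + p) := hf hxpb hqi1I (by rw [h2p]; linarith)
        have hnn : 0 ≤ f x - f (x+p) := sub_nonneg.2 (hf hxb hxpb (by linarith))
        calc ‖(f x - f (x+p)) * Real.sin (ω*x)‖
            = (f x - f (x+p)) * |Real.sin (ω*x)| := by
              rw [Real.norm_eq_abs, abs_mul, abs_of_nonneg hnn]
          _ ≤ (f (q i) - f (q (i+1))) * 1 :=
              mul_le_mul (by linarith) (hs1 _) (abs_nonneg _) (by linarith)
          _ = _ := mul_one _
    have hmid : |∫ t in (q 0)..(q n), f t * Real.sin (ω * t)| ≤ f a * p := by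
      rw [← intervalIntegral.sum_integral_adjacent_intervals
        (fun k hk => hint (q k) (q (k+1)) (hqa k) (hqmono k (k+1) (by omega)) (hqib (k+1) hk))]
      calc |∑ k ∈ Finset.range n, ∫ t in (q k)..(q (k+1)), f t * Real.sin (ω * t)|
          ≤ ∑ k ∈ Finset.range n, |∫ t in (q k)..(q (k+1)), f t * Real.sin (ω * t)| :=
            Finset.abs_sum_le_sum_abs _ _
        _ ≤ ∑ k ∈ Finset.range n, (f (q k) - f (q (k+1))) * p :=
            Finset.sum_le_sum (fun k hk => hpiece k (Finset.mem_range.1 hk))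
        _ = (f (q 0) - f (q n)) * p := by
            rw [← Finset.sum_mul, Finset.sum_range_sub' (fun i => f (q i))]
        _ ≤ f a * p := by
            have h1 : f (q 0) ≤ f a := hf (left_mem_Icc.2 hab) ⟨hqa 0, hqib 0 (Nat.zero_le n)⟩ (hqa 0)
            have h2 : 0 ≤ f (q n) := hfb.trans (hf ⟨hqa n, hqnb⟩ (right_mem_Icc.2 hab) hqnb)
            nlinarith
    calc |∫ t in a..b, f t * Real.sin (ω * t)|
        ≤ |∫ t in a..(q 0), f t * Real.sin (ω * t)|
          + |∫ t in (q 0)..(q n), f t * Real.sin (ω * t)|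
          + |∫ t in (q n)..b, f t * Real.sin (ω * t)| := by
          rw [hsplit]; exact (abs_add_le _ _).trans (by gcongr; exact abs_add_le _ _)
      _ ≤ f a * p + f a * p + f a * (2 * p) :=
          add_le_add (add_le_add hedge1 hmid) hedge2
      _ = 4 * (f a * p) := by ring

lemma Dint (n : ℕ) :
    IntegrableOn (fun t => Real.sin ((2*(n:ℝ)+1)*t)/Real.sin t) (Ioc 0 (π/2)) := by
  have hmeas : AEStronglyMeasurable (fun t => Real.sin ((2*(n:ℝ)+1)*t)/Real.sin t)
      (volume.restrict (Ioc 0 (π/2))) :=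
    ((Real.continuous_sin.comp (continuous_const.mul continuous_id)).measurable.div
      Real.measurable_sin).aestronglyMeasurable
  refine Integrable.mono' (g := fun _ => (2*(n:ℝ)+1)) (integrableOn_const ?_) hmeas ?_
  · rw [Real.volume_Ioc]; exact ENNReal.ofReal_ne_top
  · refine ae_of_all _ fun t => ?_
    rw [Real.norm_eq_abs]
    by_cases hs : Real.sin t = 0
    · simp [hs, div_zero]; positivity
    · rw [abs_div, div_le_iff₀ (abs_pos.2 hs)]
      have h1 : ((2*n+1 : ℕ) : ℝ) * t = (2*(n:ℝ)+1)*t := by push_cast; ring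
      have := abs_sin_nat (2*n+1) t
      rw [h1] at this
      refine this.trans ?_
      push_cast
      exact le_rfl
      
lemma dirichlet (n : ℕ) :
    ∫ t in Ioc (0:ℝ) (π/2), Real.sin ((2*(n:ℝ)+1)*t)/Real.sin t = π/2 := by
  induction n with
  | zero =>
    rw [setIntegral_congr_fun measurableSet_Ioc (g := fun _ => (1:ℝ)) ?_]
    · simp [Real.volume_Ioc, ENNReal.toReal_ofReal (by positivity : (0:ℝ) ≤ π/2)]; positivity
    · intro t ht
      have hs : Real.sin t ≠ 0 :=
        (Real.sin_pos_of_pos_of_lt_pi ht.1 (lt_of_le_of_lt ht.2 (by linarith [Real.pi_pos]))).ne'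
      simp only
      have e : (2*((0:ℕ):ℝ)+1)*t = t := by push_cast; ring
      rw [e, div_self hs]
  | succ n ih =>
    have key : ∫ t in Ioc (0:ℝ) (π/2),
        (Real.sin ((2*((n:ℝ)+1)+1)*t)/Real.sin t - Real.sin ((2*(n:ℝ)+1)*t)/Real.sin t) = 0 := by
      rw [setIntegral_congr_fun measurableSet_Ioc
        (g := fun t => 2 * Real.cos ((2*(n:ℝ)+2)*t)) ?_]
      · rw [← intervalIntegral.integral_of_le (by positivity : (0:ℝ) ≤ π/2)]
        have h2 : (2*(n:ℝ)+2) ≠ 0 := by positivity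
        have := intervalIntegral.mul_integral_comp_mul_left (a := 0) (b := π/2)
          (c := 2*(n:ℝ)+2) (f := Real.cos)
        rw [integral_cos] at this
        have h3 : Real.sin ((2*(n:ℝ)+2) * (π/2)) = 0 := by
          have : (2*(n:ℝ)+2) * (π/2) = ((n+1 : ℕ) : ℝ) * π := by push_cast; ring
          rw [this, Real.sin_nat_mul_pi]
        rw [intervalIntegral.integral_const_mul]
        have h4 : ∫ x in (0:ℝ)..(π/2), Real.cos ((2*(n:ℝ)+2) * x) = 0 := by
          have h5 := this
          rw [mul_zero, Real.sin_zero, sub_zero, h3] at h5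
          exact (mul_eq_zero.mp h5).resolve_left h2
        rw [h4, mul_zero]
      · intro t ht
        have hs : Real.sin t ≠ 0 :=
          (Real.sin_pos_of_pos_of_lt_pi ht.1 (lt_of_le_of_lt ht.2 (by linarith [Real.pi_pos]))).ne'
        simp only
        rw [div_sub_div_same, Real.sin_sub_sin]
        have e1 : ((2*((n:ℝ)+1)+1)*t - (2*(n:ℝ)+1)*t)/2 = t := by ring
        have e2 : ((2*((n:ℝ)+1)+1)*t + (2*(n:ℝ)+1)*t)/2 = (2*(n:ℝ)+2)*t := by ring
        rw [e1, e2]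
        field_simp
    have hsub := integral_sub (Dint (n+1)) (Dint n)
    push_cast at hsub key ih ⊢
    rw [hsub] at key
    linarith

lemma RL_sin {g : ℝ → ℝ} (hg : Integrable g) :
    Tendsto (fun c : ℝ => ∫ v, g v * Real.sin (c * v)) atTop (𝓝 0) := by
  have hGi : Integrable (fun v => (g v : ℂ)) := hg.ofReal
  have H := Real.tendsto_integral_exp_smul_cocompact (fun v => (g v : ℂ))
  have hw : Tendsto (fun c : ℝ => c / (2 * π)) atTop (cocompact ℝ) := by
    rw [cocompact_eq_atBot_atTop]
    exact (tendsto_id.atTop_div_const (by positivity)).mono_right le_sup_right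
  have H2 := H.comp hw
  have him : ∀ c : ℝ,
      (∫ v : ℝ, Real.fourierChar (-(v * (c / (2 * π)))) • (g v : ℂ)).im
        = -∫ v, g v * Real.sin (c * v) := by
    intro c
    have hInt : Integrable (fun v : ℝ => Real.fourierChar (-(v * (c / (2 * π)))) • (g v : ℂ)) :=
      by
        have := (Real.fourierIntegral_convergent_iff (f := fun v => (g v : ℂ)) (μ := volume) (c / (2 * π))).2 hGi
        simpa [mul_comm] using this
    have him0 : (∫ v : ℝ, Real.fourierChar (-(v * (c / (2 * π)))) • (g v : ℂ)).im
        = ∫ v : ℝ, (Real.fourierChar (-(v * (c / (2 * π)))) • (g v : ℂ)).im := by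
      rw [← Complex.imCLM_apply]
      exact (ContinuousLinearMap.integral_comp_comm _ hInt).symm
    rw [him0, ← integral_neg]
    congr 1; funext v
    rw [Circle.smul_def, Real.fourierChar_apply]
    have harg : 2 * π * -(v * (c / (2 * π))) = -(c * v) := by
      field_simp
    rw [harg]
    have : (Complex.exp (↑(-(c * v)) * Complex.I) • (g v : ℂ)).im
        = Real.sin (-(c * v)) * g v := by
      rw [smul_eq_mul, Complex.mul_im, Complex.ofReal_im, Complex.ofReal_re,
        Complex.exp_ofReal_mul_I_im]
      
      ring
    rw [this, Real.sin_neg]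
    ring
  have H3 : Tendsto (fun c : ℝ =>
      (∫ v : ℝ, Real.fourierChar (-(v * (c / (2 * π)))) • (g v : ℂ)).im) atTop (𝓝 0) := by
    have := (Complex.continuous_im.tendsto 0).comp H2
    exact this
  simp only [him] at H3
  simpa using H3.neg


lemma sincII (a b : ℝ) : IntervalIntegrable (fun u => Real.sin u / u) volume a b := by
  rw [intervalIntegrable_iff]
  refine Integrable.mono' (g := fun _ => (1:ℝ)) (integrableOn_const ?_)
    ((Real.measurable_sin.div measurable_id).aestronglyMeasurable) (ae_of_all _ fun u => ?_)
  · exact measure_Ioc_lt_top.ne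
  · rw [Real.norm_eq_abs]
    by_cases hu : u = 0
    · simp [hu]
    · rw [abs_div, div_le_one (abs_pos.2 hu)]
      exact (Real.abs_sin_lt_abs hu).le

lemma g0int : IntegrableOn (fun t => 1/t - 1/Real.sin t) (Ioc 0 (π/2)) := by
  refine Integrable.mono' (g := fun _ => (4:ℝ)) (integrableOn_const ?_)
    (((measurable_const.div measurable_id).sub
      (measurable_const.div Real.measurable_sin)).aestronglyMeasurable)
    (((ae_restrict_iff' measurableSet_Ioc).2 (ae_of_all _ fun t ht => ?_)))
  · exact measure_Ioc_lt_top.ne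
  · have hpi4 := Real.pi_le_four
    have hpi := Real.pi_pos
    have htpos : 0 < t := ht.1
    have htle : t ≤ π/2 := ht.2
    have hs : 0 < Real.sin t := Real.sin_pos_of_pos_of_lt_pi htpos (by linarith)
    have hts : Real.sin t ≤ t := Real.sin_le htpos.le
    have hJ : 2/π * t ≤ Real.sin t := Real.mul_le_sin htpos.le htle
    have habs : |1/t - 1/Real.sin t| = 1/Real.sin t - 1/t := by
      rw [abs_of_nonpos (sub_nonpos.2 (one_div_le_one_div_of_le hs hts)), neg_sub]
    rw [Real.norm_eq_abs, habs]
    show 1/Real.sin t - 1/t ≤ 4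
    have hexpr : 1/Real.sin t - 1/t = (t - Real.sin t)/(Real.sin t * t) := by
      field_simp
    rw [hexpr]
    rcases le_or_gt t 1 with h1 | h1
    · have hcube : t - Real.sin t ≤ t^3/4 := by
        have := Real.sin_gt_sub_cube htpos
        linarith [pow_pos htpos 3]
      have hden : 2/π * t * t ≤ Real.sin t * t := by nlinarith
      calc (t - Real.sin t)/(Real.sin t * t) ≤ (t^3/4)/(2/π * t * t) :=
            div_le_div₀ (by positivity) hcube (by positivity) hden
        _ = t * π / 8 := by
            rw [div_eq_div_iff (by positivity) (by norm_num : (8:ℝ) ≠ 0)]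
            first
            | (field_simp; ring)
            | field_simp
        _ ≤ 4 := by nlinarith
    · have hst : 1/2 ≤ Real.sin t := by
        have : 2/π * t ≥ 2/π * 1 := by gcongr <;> positivity
        have h2pi : (1:ℝ)/2 ≤ 2/π := by
          rw [div_le_div_iff₀ (by norm_num) hpi]; linarith
        linarith
      rw [div_le_iff₀ (by positivity)]
      nlinarith [mul_le_mul hst h1.le zero_le_one hs.le]

lemma sinc_tendsto :
    Tendsto (fun n : ℕ => ∫ u in (0:ℝ)..((2*(n:ℝ)+1)*(π/2)), Real.sin u / u)
      atTop (𝓝 (π/2)) := by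
  have hprod : ∀ n : ℕ, IntegrableOn
      (fun t => Real.sin ((2*(n:ℝ)+1)*t) * (1/t - 1/Real.sin t)) (Ioc 0 (π/2)) := by
    intro n
    refine Integrable.bdd_mul (c := 1) g0int
      ((Real.continuous_sin.comp (continuous_const.mul continuous_id)).aestronglyMeasurable)
      (ae_of_all _ fun x => ?_)
    rw [Real.norm_eq_abs]
    exact abs_le.mpr ⟨Real.neg_one_le_sin _, Real.sin_le_one _⟩
  have step1 : ∀ n : ℕ, ∫ u in (0:ℝ)..((2*(n:ℝ)+1)*(π/2)), Real.sin u / u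
      = ∫ t in (0:ℝ)..(π/2), Real.sin ((2*(n:ℝ)+1)*t) / t := by
    intro n
    have hc : (0:ℝ) < 2*(n:ℝ)+1 := by positivity
    have h1 := intervalIntegral.mul_integral_comp_mul_left (a := (0:ℝ)) (b := π/2)
      (c := 2*(n:ℝ)+1) (f := fun u => Real.sin u / u)
    rw [mul_zero] at h1
    rw [← h1, ← intervalIntegral.integral_const_mul]
    congr 1; funext t
    by_cases ht : t = 0
    · simp [ht]
    · field_simp
  have step2 : ∀ n : ℕ, ∫ t in (0:ℝ)..(π/2), Real.sin ((2*(n:ℝ)+1)*t) / t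
      = π/2 + ∫ t in Ioc (0:ℝ) (π/2),
          Real.sin ((2*(n:ℝ)+1)*t) * (1/t - 1/Real.sin t) := by
    intro n
    rw [intervalIntegral.integral_of_le (by positivity : (0:ℝ) ≤ π/2)]
    have key : (fun t => Real.sin ((2*(n:ℝ)+1)*t) / t)
        = fun t => Real.sin ((2*(n:ℝ)+1)*t)/Real.sin t
            + Real.sin ((2*(n:ℝ)+1)*t) * (1/t - 1/Real.sin t) := by
      funext t; rw [mul_sub, mul_one_div, mul_one_div]; ring
    rw [key, integral_add (Dint n) (hprod n), dirichlet n]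
  have hcn : Tendsto (fun n : ℕ => 2*(n:ℝ)+1) atTop atTop := by
    apply tendsto_atTop_add_const_right
    exact (tendsto_natCast_atTop_atTop).const_mul_atTop (by norm_num)
  set g0 : ℝ → ℝ := indicator (Ioc 0 (π/2)) (fun t => 1/t - 1/Real.sin t) with hg0def
  have hg0 : Integrable g0 := g0int.integrable_indicator measurableSet_Ioc
  have hRL := (RL_sin hg0).comp hcn
  have hconv : ∀ n : ℕ, ∫ v, g0 v * Real.sin ((2*(n:ℝ)+1) * v)
      = ∫ t in Ioc (0:ℝ) (π/2), Real.sin ((2*(n:ℝ)+1)*t) * (1/t - 1/Real.sin t) := by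
    intro n
    rw [← integral_indicator measurableSet_Ioc]
    congr 1; funext v
    by_cases hv : v ∈ Ioc (0:ℝ) (π/2)
    · simp only [hg0def, indicator_of_mem hv]; ring
    · simp [hg0def, indicator_of_notMem hv]
  have heq : (fun n : ℕ => ∫ u in (0:ℝ)..((2*(n:ℝ)+1)*(π/2)), Real.sin u / u)
      = fun n : ℕ => π/2 + ∫ v, g0 v * Real.sin ((2*(n:ℝ)+1) * v) := by
    funext n; rw [step1, step2, hconv]
  rw [heq]
  have : Tendsto (fun n : ℕ => ∫ v, g0 v * Real.sin ((2*(n:ℝ)+1) * v)) atTop (𝓝 0) := hRL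
  simpa using tendsto_const_nhds.add this

end Stmt0Aux

lemma Kint (K : ℝ → ℝ) (hloc : LocallyIntegrableOn K (Ioi 0))
    (hint0 : IntegrableOn K (Ioc 0 1)) (y : ℝ) :
    IntegrableOn K (Ioc 0 y) := by
  rcases le_or_gt y 1 with h | h
  · exact hint0.mono_set (Ioc_subset_Ioc_right h)
  · have h2 : IntegrableOn K (Icc 1 y) :=
      hloc.integrableOn_compact_subset (fun x hx => lt_of_lt_of_le one_pos hx.1) isCompact_Icc
    refine (hint0.union h2).mono_set ?_
    intro x hx
    rcases le_or_gt x 1 with h3 | h3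
    · exact Or.inl ⟨hx.1, h3⟩
    · exact Or.inr ⟨h3.le, hx.2⟩

lemma KsinII (K : ℝ → ℝ) (hKi : ∀ y : ℝ, IntegrableOn K (Ioc 0 y)) (ω c d : ℝ)
    (hc : 0 ≤ c) (hcd : c ≤ d) :
    IntervalIntegrable (fun t => K t * Real.sin (ω * t)) volume c d := by
  rw [intervalIntegrable_iff_integrableOn_Ioc_of_le hcd]
  have hK : IntegrableOn K (Ioc c d) := (hKi d).mono_set (Ioc_subset_Ioc_left hc)
  refine hK.norm.mono' (hK.aestronglyMeasurable.mul
    ((Real.continuous_sin.comp (continuous_const.mul continuous_id)).aestronglyMeasurable))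
    (ae_of_all _ fun t => ?_)
  rw [Real.norm_eq_abs, abs_mul]
  calc |K t| * |Real.sin (ω * t)| ≤ |K t| * 1 := by
        gcongr
        exact abs_le.mpr ⟨Real.neg_one_le_sin _, Real.sin_le_one _⟩
    _ = ‖K t‖ := by rw [mul_one, Real.norm_eq_abs]

theorem stmt_0 (K : ℝ → ℝ) (C₁ : ℝ) (hC₁ : 0 < C₁)
    (hloc : LocallyIntegrableOn K (Ioi 0))
    (hint0 : IntegrableOn K (Ioc 0 1))
    (hdec : ∃ A > (0:ℝ), AntitoneOn K (Ici A))
    (hK0 : Tendsto K atTop (nhds 0))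
    (htK : Tendsto (fun t => t * K t) atTop (nhds C₁))
    (Ksin : ℝ → ℝ)
    (hKsin : ∀ ω > (0:ℝ),
      Tendsto (fun T => ∫ t in (0:ℝ)..T, K t * Real.sin (ω * t)) atTop (nhds (Ksin ω))) :
    Tendsto Ksin (nhdsWithin 0 (Ioi 0)) (nhds (C₁ * π / 2)) := by
  rw [Metric.tendsto_nhdsWithin_nhds]
  intro ε hε
  obtain ⟨A, hA, hanti⟩ := hdec
  have hpi := Real.pi_pos
  have hKnn : ∀ t, A ≤ t → 0 ≤ K t := by
    intro t ht
    refine le_of_tendsto hK0 ?_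
    filter_upwards [eventually_ge_atTop t] with s hs
    exact hanti ht (ht.trans hs) hs
  have hC₁1 : (0:ℝ) < C₁ + 1 := by linarith
  -- eventual bound |t K t - C₁| ≤ 1
  obtain ⟨A₁, hA₁⟩ : ∃ N, ∀ t ≥ N, |t * K t - C₁| ≤ 1 := by
    have := Metric.tendsto_nhds.mp htK 1 one_pos
    rw [eventually_atTop] at this
    obtain ⟨N, hN⟩ := this
    exact ⟨N, fun t ht => by rw [← Real.dist_eq]; exact (hN t ht).le⟩
  -- choose B
  have hBseq : Tendsto (fun n : ℕ => (2*(n:ℝ)+1)*(π/2)) atTop atTop := by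
    apply Tendsto.atTop_mul_const (by positivity)
    apply tendsto_atTop_add_const_right
    exact (tendsto_natCast_atTop_atTop).const_mul_atTop (by norm_num)
  have hsinc_ev : ∀ᶠ n : ℕ in atTop,
      |(∫ u in (0:ℝ)..((2*(n:ℝ)+1)*(π/2)), Real.sin u / u) - π/2| ≤ ε/(6*(C₁+1)) := by
    filter_upwards [Metric.tendsto_nhds.mp sinc_tendsto (ε/(6*(C₁+1))) (by positivity)] with n hn
    rw [Real.dist_eq] at hn; exact hn.le
  obtain ⟨n, hn1, hn2⟩ := ((hBseq.eventually_gt_atTop (24*π*(C₁+1)/ε)).and hsinc_ev).exists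
  set B : ℝ := (2*(n:ℝ)+1)*(π/2) with hBdef
  have hB : 0 < B := by positivity
  have hBtail : 4*π*(C₁+1)/B < ε/6 := by
    rw [div_lt_iff₀ hB]
    rw [div_lt_iff₀ hε] at hn1
    nlinarith
  -- choose B'
  obtain ⟨N₂, hN₂⟩ : ∃ N, ∀ t ≥ N, |t * K t - C₁| ≤ ε/(6*B) := by
    have := Metric.tendsto_nhds.mp htK (ε/(6*B)) (by positivity)
    rw [eventually_atTop] at this
    obtain ⟨N, hN⟩ := this
    exact ⟨N, fun t ht => by rw [← Real.dist_eq]; exact (hN t ht).le⟩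
  set B' : ℝ := max (max A₁ N₂) (max A 1) with hB'def
  have hB'A : A ≤ B' := le_max_of_le_right (le_max_left _ _)
  have hB'1 : (1:ℝ) ≤ B' := le_max_of_le_right (le_max_right _ _)
  have hB'A₁ : A₁ ≤ B' := le_max_of_le_left (le_max_left _ _)
  have hB'N₂ : N₂ ≤ B' := le_max_of_le_left (le_max_right _ _)
  have hB'pos : (0:ℝ) < B' := lt_of_lt_of_le one_pos hB'1
  set CB : ℝ := ∫ t in (0:ℝ)..B', |K t| with hCBdef
  have hCB0 : 0 ≤ CB :=
    intervalIntegral.integral_nonneg (by linarith) (fun t _ => abs_nonneg _)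
  set δ : ℝ := min (B/B') (ε/(6*(B'*CB + C₁*B' + 1))) with hδdef
  have hδ : 0 < δ := lt_min (by positivity) (by positivity)
  refine ⟨δ, hδ, ?_⟩
  intro ω hω hdist
  rw [Real.dist_eq, sub_zero] at hdist
  have hω0 : (0:ℝ) < ω := hω
  rw [abs_of_pos hω0] at hdist
  have hω1 : ω * B' < B := by
    have h := hdist.trans_le (min_le_left _ _)
    rw [lt_div_iff₀ hB'pos] at h
    linarith
  have hω2 : ω * (B'*CB + C₁*B' + 1) < ε/6 := by
    have h := hdist.trans_le (min_le_right _ _)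
    rw [lt_div_iff₀ (by positivity : (0:ℝ) < 6*(B'*CB + C₁*B' + 1))] at h
    have hX : (0:ℝ) < B'*CB + C₁*B' + 1 := by positivity
    nlinarith
  set a : ℝ := B/ω with hadef
  have ha : 0 < a := div_pos hB hω0
  have hB'a : B' ≤ a := by
    rw [le_div_iff₀ hω0]
    nlinarith
  have haA : A ≤ a := hB'A.trans hB'a
  have haA₁ : A₁ ≤ a := hB'A₁.trans hB'a
  have haω : a * ω = B := div_mul_cancel₀ _ hω0.ne'
  have hKi : ∀ y : ℝ, IntegrableOn K (Ioc 0 y) := Kint K hloc hint0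
  have hII : ∀ c d : ℝ, 0 ≤ c → c ≤ d →
      IntervalIntegrable (fun t => K t * Real.sin (ω * t)) volume c d := KsinII K hKi ω
  -- the main estimate for partial integrals
  have hmain : ∀ T, a ≤ T →
      |(∫ t in (0:ℝ)..T, K t * Real.sin (ω*t)) - C₁ * π / 2| ≤ 5/6*ε := by
    intro T hT
    have hT0 : (0:ℝ) ≤ T := ha.le.trans hT
    have hsplit : (∫ t in (0:ℝ)..T, K t * Real.sin (ω*t))
        = ((∫ t in (0:ℝ)..B', K t * Real.sin (ω*t))
            + ∫ t in B'..a, K t * Real.sin (ω*t))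
          + ∫ t in a..T, K t * Real.sin (ω*t) := by
      rw [intervalIntegral.integral_add_adjacent_intervals (hII 0 B' le_rfl hB'pos.le)
          (hII B' a hB'pos.le hB'a),
        intervalIntegral.integral_add_adjacent_intervals (hII 0 a le_rfl ha.le)
          (hII a T ha.le hT)]
    -- Term 1
    have hterm1 : |∫ t in (0:ℝ)..B', K t * Real.sin (ω*t)| ≤ ω * (B' * CB) := by
      have hKabsII : IntervalIntegrable (fun t => |K t|) volume 0 B' := by
        rw [intervalIntegrable_iff_integrableOn_Ioc_of_le hB'pos.le]
        exact (hKi B').abs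
      have h1 : |∫ t in (0:ℝ)..B', K t * Real.sin (ω*t)|
          ≤ ∫ t in (0:ℝ)..B', |K t * Real.sin (ω*t)| :=
        intervalIntegral.abs_integral_le_integral_abs hB'pos.le
      have h2 : (∫ t in (0:ℝ)..B', |K t * Real.sin (ω*t)|)
          ≤ ∫ t in (0:ℝ)..B', (ω * B') * |K t| := by
        refine intervalIntegral.integral_mono_on hB'pos.le
          ((hII 0 B' le_rfl hB'pos.le).abs) (hKabsII.const_mul _) (fun t ht => ?_)
        rw [abs_mul]
        calc |K t| * |Real.sin (ω*t)| ≤ |K t| * (ω * B') := by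
              gcongr
              exact (abs_sin_le_self (mul_nonneg hω0.le ht.1)).trans
                (mul_le_mul_of_nonneg_left ht.2 hω0.le)
          _ = (ω * B') * |K t| := mul_comm _ _
      rw [intervalIntegral.integral_const_mul] at h2
      calc |∫ t in (0:ℝ)..B', K t * Real.sin (ω*t)| ≤ (ω * B') * CB := h1.trans h2
        _ = ω * (B' * CB) := by ring
    -- Term 3 (tail)
    have hKaa : K a * a ≤ C₁ + 1 := by
      have h := hA₁ a haA₁
      rw [abs_le] at h
      nlinarith [h.2]
    have hterm3 : |∫ t in a..T, K t * Real.sin (ω*t)| ≤ 4*π*(C₁+1)/B := by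
      have hb := tail_bound K ω a T hω0 ha hT
        (hanti.mono (fun x hx => haA.trans hx.1)) (hKnn T (haA.trans hT))
        (fun c d hc hcd _ => hII c d (ha.le.trans hc) hcd)
      refine hb.trans ?_
      rw [div_le_div_iff₀ hω0 hB]
      have h0 : 0 ≤ K a := hKnn a haA
      calc 4*π*K a * B = 4*π*(K a * a) * ω := by rw [← haω]; ring
        _ ≤ 4*π*(C₁+1) * ω := by
            have h1 : 4*π*(K a * a) ≤ 4*π*(C₁+1) :=
              mul_le_mul_of_nonneg_left hKaa (by positivity)
            exact mul_le_mul_of_nonneg_right h1 hω0.le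
    -- Term 2
    have hIIc : IntervalIntegrable (fun t => C₁ * (Real.sin (ω*t)/t)) volume B' a := by
      apply ContinuousOn.intervalIntegrable
      rw [uIcc_of_le hB'a]
      exact continuousOn_const.mul
        (((Real.continuous_sin.comp (continuous_const.mul continuous_id)).continuousOn).div
          continuousOn_id (fun x hx => (lt_of_lt_of_le hB'pos hx.1).ne'))
    have hE : IntervalIntegrable
        (fun t => K t * Real.sin (ω*t) - C₁ * (Real.sin (ω*t)/t)) volume B' a :=
      (hII B' a hB'pos.le hB'a).sub hIIc
    have hsplitT2 : (∫ t in B'..a, K t * Real.sin (ω*t))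
        = (∫ t in B'..a, (K t * Real.sin (ω*t) - C₁ * (Real.sin (ω*t)/t)))
          + C₁ * ∫ t in B'..a, Real.sin (ω*t)/t := by
      rw [← intervalIntegral.integral_const_mul, ← intervalIntegral.integral_add hE hIIc]
      congr 1; funext t; ring
    have hsubst : (∫ t in B'..a, Real.sin (ω*t)/t) = ∫ u in (ω*B')..B, Real.sin u / u := by
      have h1 := intervalIntegral.mul_integral_comp_mul_left (a := B') (b := a) (c := ω)
        (f := fun u => Real.sin u / u)
      rw [show ω * a = B from by rw [mul_comm]; exact haω] at h1
      rw [← h1, ← intervalIntegral.integral_const_mul]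
      congr 1; funext t
      by_cases ht : t = 0
      · simp [ht]
      · field_simp
    have hhead : (∫ u in (ω*B')..B, Real.sin u/u)
        = (∫ u in (0:ℝ)..B, Real.sin u/u) - ∫ u in (0:ℝ)..(ω*B'), Real.sin u/u := by
      rw [← intervalIntegral.integral_add_adjacent_intervals (sincII 0 (ω*B')) (sincII (ω*B') B)]
      ring
    have hheadbd : |∫ u in (0:ℝ)..(ω*B'), Real.sin u/u| ≤ ω * B' := by
      have h := intervalIntegral.norm_integral_le_of_norm_le_const (C := 1)
        (f := fun u => Real.sin u/u) (a := 0) (b := ω*B') (fun x _ => by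
          rw [Real.norm_eq_abs]; exact abs_sinc_le_one x)
      rw [Real.norm_eq_abs] at h
      refine h.trans ?_
      rw [one_mul, sub_zero, abs_of_nonneg (by positivity)]
    have hEbd : |∫ t in B'..a, (K t * Real.sin (ω*t) - C₁ * (Real.sin (ω*t)/t))| ≤ ε/6 := by
      have h := intervalIntegral.norm_integral_le_of_norm_le_const (C := ε/(6*B)*ω)
        (f := fun t => K t * Real.sin (ω*t) - C₁ * (Real.sin (ω*t)/t)) (a := B') (b := a) ?_
      · rw [Real.norm_eq_abs] at h
        refine h.trans ?_
        rw [abs_of_nonneg (by linarith : (0:ℝ) ≤ a - B')]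
        have hfin2 : ε/(6*B)*ω * a = ε/6 := by
          rw [mul_assoc, mul_comm ω a, haω]
          field_simp [hB.ne']
        calc ε/(6*B)*ω * (a - B') ≤ ε/(6*B)*ω * a := by
              apply mul_le_mul_of_nonneg_left (by linarith) (by positivity)
          _ = ε/6 := hfin2
      · intro x hx
        rw [Set.uIoc_of_le hB'a] at hx
        have hx0 : (0:ℝ) < x := hB'pos.trans hx.1
        show ‖K x * Real.sin (ω*x) - C₁ * (Real.sin (ω*x)/x)‖ ≤ ε/(6*B)*ω
        have hb1 : |x * K x - C₁| ≤ ε/(6*B) := hN₂ x (hB'N₂.trans hx.1.le)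
        have hid : K x * Real.sin (ω*x) - C₁ * (Real.sin (ω*x)/x)
            = ((x * K x - C₁)/x) * Real.sin (ω*x) := by
          field_simp
        rw [Real.norm_eq_abs, hid, abs_mul, abs_div, abs_of_pos hx0]
        have heq2 : (ε/(6*B))/x * (ω*x) = ε/(6*B)*ω := by
          field_simp
        calc |x*K x - C₁|/x * |Real.sin (ω*x)|
            ≤ (ε/(6*B))/x * (ω*x) := by
              refine mul_le_mul ?_ (abs_sin_le_self (mul_nonneg hω0.le hx0.le))
                (abs_nonneg _) (by positivity)
              exact div_le_div_of_nonneg_right hb1 hx0.le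
          _ = ε/(6*B)*ω := heq2
    -- assembly
    have hID : (∫ t in (0:ℝ)..T, K t * Real.sin (ω*t)) - C₁ * π / 2
        = (∫ t in (0:ℝ)..B', K t * Real.sin (ω*t))
          + (∫ t in B'..a, (K t * Real.sin (ω*t) - C₁ * (Real.sin (ω*t)/t)))
          + C₁ * ((∫ u in (0:ℝ)..B, Real.sin u/u) - π/2)
          + (-(C₁ * (∫ u in (0:ℝ)..(ω*B'), Real.sin u/u)))
          + (∫ t in a..T, K t * Real.sin (ω*t)) := by
      rw [hsplit, hsplitT2, hsubst, hhead]; ring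
    rw [hID]
    have e1 : |∫ t in (0:ℝ)..B', K t * Real.sin (ω*t)| ≤ ε/6 := by
      refine hterm1.trans ?_
      refine (mul_le_mul_of_nonneg_left ?_ hω0.le).trans hω2.le
      nlinarith [mul_pos hC₁ hB'pos]
    have e3 : |C₁ * ((∫ u in (0:ℝ)..B, Real.sin u/u) - π/2)| ≤ ε/6 := by
      rw [abs_mul, abs_of_pos hC₁]
      have h6 : C₁ * (ε/(6*(C₁+1))) ≤ ε/6 := by
        rw [mul_div_assoc',
          div_le_div_iff₀ (by positivity : (0:ℝ) < 6*(C₁+1)) (by norm_num : (0:ℝ) < 6)]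
        nlinarith
      calc C₁ * |(∫ u in (0:ℝ)..B, Real.sin u/u) - π/2| ≤ C₁ * (ε/(6*(C₁+1))) :=
            mul_le_mul_of_nonneg_left hn2 hC₁.le
        _ ≤ ε/6 := h6
    have e4 : |-(C₁ * (∫ u in (0:ℝ)..(ω*B'), Real.sin u/u))| ≤ ε/6 := by
      rw [abs_neg, abs_mul, abs_of_pos hC₁]
      calc C₁ * |∫ u in (0:ℝ)..(ω*B'), Real.sin u/u| ≤ C₁ * (ω*B') :=
            mul_le_mul_of_nonneg_left hheadbd hC₁.le
        _ = ω * (C₁ * B') := by ring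
        _ ≤ ω * (B'*CB + C₁*B' + 1) := by
            apply mul_le_mul_of_nonneg_left _ hω0.le
            nlinarith [mul_nonneg hB'pos.le hCB0]
        _ ≤ ε/6 := hω2.le
    have habs5 : ∀ x1 x2 x3 x4 x5 : ℝ, |x1+x2+x3+x4+x5| ≤ |x1|+|x2|+|x3|+|x4|+|x5| := by
      intro x1 x2 x3 x4 x5
      calc |x1+x2+x3+x4+x5| ≤ |x1+x2+x3+x4| + |x5| := abs_add_le _ _
        _ ≤ (|x1+x2+x3| + |x4|) + |x5| := by gcongr; exact abs_add_le _ _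
        _ ≤ ((|x1+x2| + |x3|) + |x4|) + |x5| := by gcongr; exact abs_add_le _ _
        _ ≤ (((|x1| + |x2|) + |x3|) + |x4|) + |x5| := by gcongr; exact abs_add_le _ _
        _ = |x1|+|x2|+|x3|+|x4|+|x5| := by ring
    refine (habs5 _ _ _ _ _).trans ?_
    have := hterm3.trans hBtail.le
    linarith [e1, hEbd, e3, e4, this]
  -- conclude
  have hKsinω := hKsin ω hω0
  have habs : Tendsto (fun T => |(∫ t in (0:ℝ)..T, K t * Real.sin (ω*t)) - C₁ * π / 2|)
      atTop (𝓝 |Ksin ω - C₁ * π / 2|) := (hKsinω.sub_const _).abs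
  have hfin : |Ksin ω - C₁ * π / 2| ≤ 5/6*ε :=
    le_of_tendsto habs (eventually_atTop.2 ⟨a, hmain⟩)
  rw [Real.dist_eq]
  calc |Ksin ω - C₁ * π / 2| ≤ 5/6*ε := hfin
    _ < ε := by linarith
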